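/- If a random matrix Ω ∈ 𝔽^{t×n} satisfies the Strong (ε,δ)-JLM property, then for any s ∈ ℕ, the block-diagonal matrix I_s ⊗ Ω ∈ 𝔽^{ts×ns} also satisfies the Strong (ε,δ)-JLM property. -/

import Mathlib

open MeasureTheory ProbabilityTheory Matrix Kronecker
open scoped ENNReal NNReal

/-- The Strong `(ε,δ)`-JLM property of a random matrix over `𝕜 = ℝ` or `ℂ`. -/
def StrongJLM {𝕜 : Type*} [RCLike 𝕜] {Ω : Type*} [MeasurableSpace Ω] (μ : Measure Ω)
    {m n : Type*} [Fintype m] [Fintype n]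
    (M : Ω → Matrix m n 𝕜) (ε δ : ℝ) : Prop :=
  ∀ x : n → 𝕜, ∑ j, ‖x j‖ ^ 2 = 1 →
    (∫ ω, ∑ i, ‖(M ω).mulVec x i‖ ^ 2 ∂μ) = 1 ∧
    ∀ t : ℕ, 2 ≤ t → (t : ℝ) ≤ Real.log (1 / δ) →
      (∫ ω, |(∑ i, ‖(M ω).mulVec x i‖ ^ 2) - 1| ^ (t : ℝ) ∂μ) ^ (1 / (t : ℝ)) ≤
        (ε / Real.exp 1) * Real.sqrt (t / Real.log (1 / δ))

/-- If `Ω` satisfies the Strong `(ε,δ)`-JLM property then so does the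
block-diagonal matrix `I_s ⊗ Ω`. -/
theorem stmt4 {𝕜 : Type*} [RCLike 𝕜] {Ω : Type*} [MeasurableSpace Ω]
    (μ : Measure Ω) [IsProbabilityMeasure μ]
    {t n : ℕ} (M : Ω → Matrix (Fin t) (Fin n) 𝕜) (ε δ : ℝ)
    (hjlm : StrongJLM μ M ε δ) (s : ℕ) :
    StrongJLM μ (fun ω => (1 : Matrix (Fin s) (Fin s) 𝕜) ⊗ₖ M ω) ε δ := by
  intro x hx
  classical
  -- block squared norms
  set q : Fin s → ℝ := fun i => ∑ l, ‖x (i, l)‖ ^ 2 with hqdef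
  have hq0 : ∀ i, 0 ≤ q i := fun i => Finset.sum_nonneg fun l _ => by positivity
  have hqsum : ∑ i, q i = 1 := by
    rw [Fintype.sum_prod_type] at hx
    exact hx
  -- normalized block vectors
  set u : Fin s → Fin n → 𝕜 := fun i l => ((Real.sqrt (q i) : ℝ) : 𝕜)⁻¹ * x (i, l) with hudef
  have hunit : ∀ i, q i ≠ 0 → ∑ l, ‖u i l‖ ^ 2 = 1 := by
    intro i hi
    have h1 : ∀ l, ‖u i l‖ ^ 2 = (q i)⁻¹ * ‖x (i, l)‖ ^ 2 := by
      intro l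
      simp only [hudef, norm_mul, norm_inv, RCLike.norm_ofReal,
        abs_of_nonneg (Real.sqrt_nonneg _)]
      rw [mul_pow, inv_pow, Real.sq_sqrt (hq0 i)]
    rw [Finset.sum_congr rfl fun l _ => h1 l, ← Finset.mul_sum]
    exact inv_mul_cancel₀ hi
  set h : Fin s → Ω → ℝ := fun i ω => ∑ j, ‖(M ω).mulVec (u i) j‖ ^ 2 with hhdef
  have hjlm1 : ∀ i, q i ≠ 0 → (∫ ω, h i ω ∂μ) = 1 := fun i hi => (hjlm (u i) (hunit i hi)).1
  have hjlm2 : ∀ i, q i ≠ 0 → ∀ k : ℕ, 2 ≤ k → (k : ℝ) ≤ Real.log (1 / δ) →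
      (∫ ω, |h i ω - 1| ^ (k : ℝ) ∂μ) ^ (1 / (k : ℝ)) ≤
        (ε / Real.exp 1) * Real.sqrt (k / Real.log (1 / δ)) :=
    fun i hi => (hjlm (u i) (hunit i hi)).2
  -- pointwise identity for blocks
  have hrow : ∀ ω (i : Fin s) (j : Fin t),
      ((1 : Matrix (Fin s) (Fin s) 𝕜) ⊗ₖ M ω).mulVec x (i, j)
        = (M ω).mulVec (fun l => x (i, l)) j := by
    intro ω i j
    calc ((1 : Matrix (Fin s) (Fin s) 𝕜) ⊗ₖ M ω).mulVec x (i, j)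
        = ∑ k, ∑ l, ((1 : Matrix (Fin s) (Fin s) 𝕜) i k * M ω j l) * x (k, l) := by
          simp [Matrix.mulVec, dotProduct, Fintype.sum_prod_type,
            Matrix.kroneckerMap_apply]
      _ = ∑ k, (if i = k then (1:𝕜) else 0) * ∑ l, M ω j l * x (k, l) := by
          refine Finset.sum_congr rfl fun k _ => ?_
          rw [Finset.mul_sum]
          refine Finset.sum_congr rfl fun l _ => ?_
          rw [Matrix.one_apply]; ring
      _ = ∑ l, M ω j l * x (i, l) := by simp [ite_mul, zero_mul]
      _ = (M ω).mulVec (fun l => x (i, l)) j := rfl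
  have hblock : ∀ (ω : Ω) (i : Fin s),
      (∑ j, ‖((1 : Matrix (Fin s) (Fin s) 𝕜) ⊗ₖ M ω).mulVec x (i, j)‖ ^ 2) = q i * h i ω := by
    intro ω i
    by_cases hi : q i = 0
    · have hx0 : ∀ l, x (i, l) = 0 := by
        intro l
        have h0 := (Finset.sum_eq_zero_iff_of_nonneg
          (fun l _ => by positivity : ∀ l ∈ Finset.univ, 0 ≤ ‖x (i, l)‖ ^ 2)).1 hi l
          (Finset.mem_univ l)
        simpa using h0
      rw [hi, zero_mul]
      refine Finset.sum_eq_zero fun j _ => ?_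
      rw [hrow ω i j]
      have hz : (M ω).mulVec (fun l => x (i, l)) j = 0 := by
        simp [Matrix.mulVec, dotProduct, hx0]
      simp [hz]
    · have hs0 : ((Real.sqrt (q i) : ℝ) : 𝕜) ≠ 0 := by
        simp only [ne_eq, RCLike.ofReal_eq_zero]
        exact Real.sqrt_ne_zero'.2 (lt_of_le_of_ne (hq0 i) (Ne.symm hi))
      have hxl : ∀ l, x (i, l) = ((Real.sqrt (q i) : ℝ) : 𝕜) * u i l := by
        intro l
        rw [hudef]
        simp only
        rw [← mul_assoc, mul_inv_cancel₀ hs0, one_mul]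
      have hmv : ∀ j, (M ω).mulVec (fun l => x (i, l)) j
          = ((Real.sqrt (q i) : ℝ) : 𝕜) * (M ω).mulVec (u i) j := by
        intro j
        simp only [Matrix.mulVec, dotProduct, Finset.mul_sum]
        refine Finset.sum_congr rfl fun l _ => ?_
        rw [hxl l]; ring
      calc (∑ j, ‖((1 : Matrix (Fin s) (Fin s) 𝕜) ⊗ₖ M ω).mulVec x (i, j)‖ ^ 2)
          = ∑ j, q i * ‖(M ω).mulVec (u i) j‖ ^ 2 := by
            refine Finset.sum_congr rfl fun j _ => ?_
            rw [hrow ω i j, hmv j, norm_mul, mul_pow, RCLike.norm_ofReal,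
              abs_of_nonneg (Real.sqrt_nonneg _), Real.sq_sqrt (hq0 i)]
        _ = q i * h i ω := by rw [← Finset.mul_sum]
  have hmain : ∀ ω : Ω,
      (∑ p : Fin s × Fin t, ‖((1 : Matrix (Fin s) (Fin s) 𝕜) ⊗ₖ M ω).mulVec x p‖ ^ 2)
        = ∑ i, q i * h i ω := by
    intro ω
    rw [Fintype.sum_prod_type]
    exact Finset.sum_congr rfl fun i _ => hblock ω i
  have hInth : ∀ i, q i ≠ 0 → Integrable (h i) μ := by
    intro i hi
    by_contra hni
    have h1 := hjlm1 i hi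
    rw [integral_undef hni] at h1
    exact one_ne_zero h1.symm
  have hIntg : ∀ i, Integrable (fun ω => q i * h i ω) μ := by
    intro i
    by_cases hi : q i = 0
    · simp [hi]
    · exact (hInth i hi).const_mul _
  constructor
  · calc (∫ ω, ∑ p : Fin s × Fin t,
          ‖((1 : Matrix (Fin s) (Fin s) 𝕜) ⊗ₖ M ω).mulVec x p‖ ^ 2 ∂μ)
        = ∫ ω, ∑ i, q i * h i ω ∂μ := integral_congr_ae (.of_forall fun ω => hmain ω)
      _ = ∑ i, ∫ ω, q i * h i ω ∂μ := integral_finset_sum _ fun i _ => hIntg i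
      _ = ∑ i, q i := by
          refine Finset.sum_congr rfl fun i _ => ?_
          by_cases hi : q i = 0
          · simp [hi]
          · rw [integral_const_mul, hjlm1 i hi, mul_one]
      _ = 1 := hqsum
  · intro k hk2 hklog
    have hk0 : (k : ℝ) ≠ 0 := Nat.cast_ne_zero.2 (by omega)
    have hkne0 : ((k : ℝ≥0∞)) ≠ 0 := Nat.cast_ne_zero.2 (by omega)
    have hknetop : ((k : ℝ≥0∞)) ≠ ⊤ := ENNReal.natCast_ne_top k
    have hk1 : (1 : ℝ≥0∞) ≤ (k : ℝ≥0∞) := by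
      exact_mod_cast (by omega : 1 ≤ k)
    obtain ⟨i₀, hi₀⟩ : ∃ i, q i ≠ 0 := by
      by_contra hc
      push_neg at hc
      rw [Finset.sum_eq_zero (fun i _ => hc i)] at hqsum
      exact one_ne_zero hqsum.symm
    have hB0 : 0 ≤ (ε / Real.exp 1) * Real.sqrt (k / Real.log (1 / δ)) :=
      le_trans (Real.rpow_nonneg (integral_nonneg fun ω => by positivity) _)
        (hjlm2 i₀ hi₀ k hk2 hklog)
    set B := (ε / Real.exp 1) * Real.sqrt (k / Real.log (1 / δ)) with hBdef
    set S : Finset (Fin s) := Finset.univ.filter (fun i => q i ≠ 0) with hSdef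
    have hmemS : ∀ i ∈ S, q i ≠ 0 := fun i hi => (Finset.mem_filter.1 hi).2
    have hSsum : ∑ i ∈ S, q i = 1 := by
      rw [hSdef, Finset.sum_filter_ne_zero, hqsum]
    set Z : Fin s → Ω → ℝ := fun i ω => h i ω - 1 with hZdef
    have hZmeas : ∀ i ∈ S, AEStronglyMeasurable (Z i) μ := fun i hi =>
      ((hInth i (hmemS i hi)).aestronglyMeasurable.sub aestronglyMeasurable_const)
    have hWsum : ∀ ω : Ω,
        (∑ p : Fin s × Fin t, ‖((1 : Matrix (Fin s) (Fin s) 𝕜) ⊗ₖ M ω).mulVec x p‖ ^ 2) - 1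
          = ∑ i ∈ S, q i * Z i ω := by
      intro ω
      rw [hmain ω]
      have h1 : ∑ i, q i * h i ω = ∑ i ∈ S, q i * h i ω := by
        rw [hSdef]
        rw [Finset.sum_filter_of_ne]
        intro i _ hne hqi
        exact hne (by rw [hqi, zero_mul])
      rw [h1]
      have h2 : ∑ i ∈ S, q i * Z i ω = ∑ i ∈ S, q i * h i ω - ∑ i ∈ S, q i := by
        rw [← Finset.sum_sub_distrib]
        exact Finset.sum_congr rfl fun i _ => by simp only [hZdef]; ring
      rw [h2, hSsum]
    simp only [hWsum]
    set W : Ω → ℝ := fun ω => ∑ i ∈ S, q i * Z i ω with hWdef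
    have hWfun : W = ∑ i ∈ S, q i • Z i := by
      funext ω
      rw [Finset.sum_apply]
      exact Finset.sum_congr rfl fun i _ => by simp [smul_eq_mul]
    by_cases hA : ∀ i ∈ S, eLpNorm (Z i) (k : ℝ≥0∞) μ < ⊤
    · -- all blocks in L^k : Minkowski
      have hmem : ∀ i ∈ S, MemLp (Z i) (k : ℝ≥0∞) μ := fun i hi => ⟨hZmeas i hi, hA i hi⟩
      have hbound : ∀ i ∈ S, eLpNorm (Z i) (k : ℝ≥0∞) μ ≤ ENNReal.ofReal B := by
        intro i hi
        rw [ENNReal.le_ofReal_iff_toReal_le (hA i hi).ne hB0]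
        rw [(hmem i hi).eLpNorm_eq_integral_rpow_norm hkne0 hknetop,
          ENNReal.toReal_ofReal (Real.rpow_nonneg
            (integral_nonneg fun ω => by positivity) _)]
        have hq := hjlm2 i (hmemS i hi) k hk2 hklog
        simp only [ENNReal.toReal_natCast, Real.norm_eq_abs]
        rw [← one_div]
        exact hq
      have hWmem : MemLp W (k : ℝ≥0∞) μ := by
        rw [hWfun]
        exact memLp_finset_sum' S fun i hi => (hmem i hi).const_smul (q i)
      have hWle : eLpNorm W (k : ℝ≥0∞) μ ≤ ENNReal.ofReal B := by
        rw [hWfun]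
        calc eLpNorm (∑ i ∈ S, q i • Z i) (k : ℝ≥0∞) μ
            ≤ ∑ i ∈ S, eLpNorm (q i • Z i) (k : ℝ≥0∞) μ :=
              eLpNorm_sum_le (fun i hi => (hZmeas i hi).const_smul (q i)) hk1
          _ = ∑ i ∈ S, (‖q i‖₊ : ℝ≥0∞) * eLpNorm (Z i) (k : ℝ≥0∞) μ :=
              Finset.sum_congr rfl fun i _ => eLpNorm_const_smul _ _ _ _
          _ ≤ ∑ i ∈ S, ENNReal.ofReal (q i) * ENNReal.ofReal B := by
              refine Finset.sum_le_sum fun i hi => ?_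
              rw [← enorm_eq_nnnorm, ← ofReal_norm, Real.norm_of_nonneg (hq0 i)]
              exact mul_le_mul_right (hbound i hi) _
          _ = ENNReal.ofReal B := by
              rw [← Finset.sum_mul, ← ENNReal.ofReal_sum_of_nonneg fun i _ => hq0 i,
                hSsum, ENNReal.ofReal_one, one_mul]
      have hgoal : (∫ ω, |W ω| ^ (k : ℝ) ∂μ) ^ (1 / (k : ℝ))
          = (eLpNorm W (k : ℝ≥0∞) μ).toReal := by
        rw [hWmem.eLpNorm_eq_integral_rpow_norm hkne0 hknetop,
          ENNReal.toReal_ofReal (Real.rpow_nonneg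
            (integral_nonneg fun ω => by positivity) _)]
        simp [Real.norm_eq_abs, one_div]
      rw [hgoal]
      calc (eLpNorm W (k : ℝ≥0∞) μ).toReal
          ≤ (ENNReal.ofReal B).toReal := ENNReal.toReal_mono ENNReal.ofReal_ne_top hWle
        _ = B := ENNReal.toReal_ofReal hB0
    · -- some block not in L^k : the combined variable is not in L^k either
      push_neg at hA
      obtain ⟨i₁, hi₁S, hi₁⟩ := hA
      have hZtop : eLpNorm (Z i₁) (k : ℝ≥0∞) μ = ⊤ := by
        simpa [lt_top_iff_ne_top, not_not] using hi₁
      have hq₁ : q i₁ ≠ 0 := hmemS i₁ hi₁S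
      have hh0 : ∀ i ω, 0 ≤ h i ω := fun i ω => Finset.sum_nonneg fun j _ => by positivity
      set P : Ω → ℝ := fun ω => max (Z i₁ ω) 0 with hPdef
      have hPmeas : AEStronglyMeasurable P μ := by
        have : P = (Z i₁) ⊔ (fun _ => (0:ℝ)) := by
          funext ω; simp [hPdef, Pi.sup_apply]
        rw [this]
        exact (hZmeas i₁ hi₁S).sup aestronglyMeasurable_const
      have hP1top : eLpNorm (fun ω => P ω + 1) (k : ℝ≥0∞) μ = ⊤ := by
        refine top_le_iff.1 ?_
        rw [← hZtop]
        refine eLpNorm_mono fun ω => ?_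
        have h1 : |Z i₁ ω| ≤ P ω + 1 := by
          rw [abs_le]
          constructor
          · have : (0:ℝ) ≤ h i₁ ω := hh0 i₁ ω
            have hP0 : (0:ℝ) ≤ P ω := le_max_right _ _
            simp only [hZdef]
            nlinarith
          · exact le_add_of_le_of_nonneg (le_max_left _ _) zero_le_one
        calc ‖Z i₁ ω‖ = |Z i₁ ω| := Real.norm_eq_abs _
          _ ≤ P ω + 1 := h1
          _ ≤ |P ω + 1| := le_abs_self _
          _ = ‖P ω + 1‖ := (Real.norm_eq_abs _).symm
      have hPtop : eLpNorm P (k : ℝ≥0∞) μ = ⊤ := by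
        by_contra hne
        have hconst : eLpNorm (fun _ : Ω => (1:ℝ)) (k : ℝ≥0∞) μ < ⊤ :=
          (memLp_const (1:ℝ)).2
        have := eLpNorm_add_le hPmeas (aestronglyMeasurable_const : AEStronglyMeasurable
          (fun _ : Ω => (1:ℝ)) μ) hk1
        have hlt : eLpNorm (P + fun _ : Ω => (1:ℝ)) (k : ℝ≥0∞) μ < ⊤ :=
          lt_of_le_of_lt this (ENNReal.add_lt_top.2 ⟨lt_top_iff_ne_top.2 hne, hconst⟩)
        have heq : (fun ω => P ω + 1) = (P + fun _ : Ω => (1:ℝ)) := rfl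
        rw [heq] at hP1top
        exact hlt.ne hP1top
      have hqPtop : eLpNorm (fun ω => q i₁ * P ω) (k : ℝ≥0∞) μ = ⊤ := by
        have heq : (fun ω => q i₁ * P ω) = q i₁ • P := by
          funext ω; simp [smul_eq_mul]
        rw [heq, eLpNorm_const_smul, hPtop, ENNReal.mul_top (by simpa using hq₁)]
      have hW1top : eLpNorm (fun ω => W ω + 1) (k : ℝ≥0∞) μ = ⊤ := by
        refine top_le_iff.1 ?_
        rw [← hqPtop]
        refine eLpNorm_mono fun ω => ?_
        have hP0 : (0:ℝ) ≤ P ω := le_max_right _ _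
        have hW1 : W ω + 1 = ∑ i ∈ S, q i * h i ω := by
          have h3 : ∑ i ∈ S, q i * Z i ω + ∑ i ∈ S, q i = ∑ i ∈ S, q i * h i ω := by
            rw [← Finset.sum_add_distrib]
            exact Finset.sum_congr rfl fun i _ => by simp only [hZdef]; ring
          rw [hSsum] at h3
          exact h3
        have hle : q i₁ * P ω ≤ W ω + 1 := by
          rw [hW1]
          have h2 : q i₁ * P ω ≤ q i₁ * h i₁ ω := by
            refine mul_le_mul_of_nonneg_left ?_ (hq0 i₁)
            refine max_le ?_ (hh0 i₁ ω)
            simp only [hZdef]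
            linarith [hh0 i₁ ω]
          exact le_trans h2
            (Finset.single_le_sum (fun i _ => mul_nonneg (hq0 i) (hh0 i ω)) hi₁S)
        have hnn : (0:ℝ) ≤ q i₁ * P ω := mul_nonneg (hq0 i₁) hP0
        rw [Real.norm_eq_abs, Real.norm_eq_abs, abs_of_nonneg hnn]
        exact le_trans hle (le_abs_self _)
      have hnint : ¬ Integrable (fun ω => |W ω| ^ (k : ℝ)) μ := by
        intro hInt
        have hWmeas : AEStronglyMeasurable W μ := by
          rw [hWfun]
          exact Finset.aestronglyMeasurable_sum S fun i _ =>
            ((hInth i (hmemS i ‹_›)).aestronglyMeasurable.sub aestronglyMeasurable_const).const_smul (q i)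
        have h1 : MemLp (fun ω => ‖W ω‖ ^ ((k : ℝ≥0∞)).toReal) ((k : ℝ≥0∞) / (k : ℝ≥0∞)) μ := by
          rw [ENNReal.div_self hkne0 hknetop, memLp_one_iff_integrable]
          simpa [Real.norm_eq_abs, ENNReal.toReal_natCast] using hInt
        have hWmem : MemLp W (k : ℝ≥0∞) μ := (memLp_norm_rpow_iff hWmeas hkne0 hknetop).1 h1
        have hconst2 : eLpNorm (fun _ : Ω => (1:ℝ)) (k : ℝ≥0∞) μ < ⊤ := (memLp_const (1:ℝ)).2
        have hadd := eLpNorm_add_le hWmeas (aestronglyMeasurable_const :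
          AEStronglyMeasurable (fun _ : Ω => (1:ℝ)) μ) hk1
        have hlt2 : eLpNorm (W + fun _ : Ω => (1:ℝ)) (k : ℝ≥0∞) μ < ⊤ :=
          lt_of_le_of_lt hadd (ENNReal.add_lt_top.2 ⟨hWmem.2, hconst2⟩)
        have heq2 : (fun ω => W ω + 1) = (W + fun _ : Ω => (1:ℝ)) := rfl
        rw [heq2] at hW1top
        exact hlt2.ne hW1top
      rw [integral_undef hnint, Real.zero_rpow (one_div_ne_zero hk0)]
      exact hB0
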